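/- Let H be a graph with vertex set {v_1,…,v_z}, let ρ⃗ be a fracture of H, and let s_1,…,s_z be signatures. Define coeff_{H,s⃗}(ρ⃗) := ∑_{σ⃗ ≤ ρ⃗} μ⃗(σ⃗,ρ⃗) · ∏_{i=1}^z ∏_{B ∈ σ⃗(v_i)} s_i(|B|)/s_i(0), where the sum is over all fractures σ⃗ with σ⃗(v_i) refining ρ⃗(v_i) for every i, and μ⃗(σ⃗,ρ⃗) := ∏_{i=1}^z μ(σ⃗(v_i), ρ⃗(v_i)). Then coeff_{H,s⃗}(ρ⃗) = ∏_{i=1}^z ∏_{B ∈ ρ⃗(v_i)} χ(|B|, s_i). -/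

import Mathlib

open Finset

/-- `P` is a set partition of the finite set `s`. -/
def IsPartitionOf {α : Type*} [DecidableEq α] (s : Finset α) (P : Finset (Finset α)) : Prop :=
  ∅ ∉ P ∧ (∀ B ∈ P, B ⊆ s) ∧ ∀ a ∈ s, ∃! B, B ∈ P ∧ a ∈ B

open Classical in
noncomputable def partitionsOf {α : Type*} [DecidableEq α] (s : Finset α) :
    Finset (Finset (Finset α)) :=
  s.powerset.powerset.filter (IsPartitionOf s)

/-- The fingerprint `χ(d, s)` of a signature `s`. -/
noncomputable def chi (s : ℕ → ℂ) (d : ℕ) : ℂ :=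
  ∑ P ∈ partitionsOf (Finset.univ : Finset (Fin d)),
    (-1 : ℂ) ^ (P.card - 1) * ((P.card - 1).factorial : ℂ) * ∏ B ∈ P, s B.card / s 0

section Helpers
variable {γ δ : Type*} [DecidableEq γ] [DecidableEq δ]

lemma mem_partitionsOf {s : Finset γ} {P : Finset (Finset γ)} :
    P ∈ partitionsOf s ↔ IsPartitionOf s P := by
  classical
  simp only [partitionsOf, mem_filter, mem_powerset]
  exact ⟨fun h => h.2, fun h => ⟨fun B hB => mem_powerset.2 (h.2.1 B hB), h⟩⟩

lemma IsPartitionOf.nonempty_of_mem {s : Finset γ} {P : Finset (Finset γ)}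
    (hP : IsPartitionOf s P) {B : Finset γ} (hB : B ∈ P) : B.Nonempty := by
  rw [Finset.nonempty_iff_ne_empty]; rintro rfl; exact hP.1 hB

lemma IsPartitionOf.block_eq {s : Finset γ} {P : Finset (Finset γ)} (hP : IsPartitionOf s P)
    {B1 B2 : Finset γ} (h1 : B1 ∈ P) (h2 : B2 ∈ P) {a : γ} (ha1 : a ∈ B1) (ha2 : a ∈ B2) :
    B1 = B2 := by
  obtain ⟨B, hB, hu⟩ := hP.2.2 a (hP.2.1 B1 h1 ha1)
  rw [hu B1 ⟨h1, ha1⟩, hu B2 ⟨h2, ha2⟩]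

lemma IsPartitionOf.image_finset {g : γ → δ} {t : Finset γ} (hg : Set.InjOn g ↑t)
    {P : Finset (Finset γ)} (hP : IsPartitionOf t P) :
    IsPartitionOf (t.image g) (P.image fun A => A.image g) := by
  refine ⟨?_, ?_, ?_⟩
  · intro h
    obtain ⟨A, hA, hAe⟩ := Finset.mem_image.1 h
    rw [Finset.image_eq_empty] at hAe
    exact hP.1 (hAe ▸ hA)
  · rintro B hB
    obtain ⟨A, hA, rfl⟩ := Finset.mem_image.1 hB
    exact Finset.image_subset_image (hP.2.1 A hA)
  · rintro b hb
    obtain ⟨a, ha, rfl⟩ := Finset.mem_image.1 hb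
    obtain ⟨A, ⟨hA, haA⟩, hu⟩ := hP.2.2 a ha
    refine ⟨A.image g, ⟨Finset.mem_image_of_mem _ hA, Finset.mem_image_of_mem _ haA⟩, ?_⟩
    rintro B ⟨hB, hgB⟩
    obtain ⟨A', hA', rfl⟩ := Finset.mem_image.1 hB
    obtain ⟨a', ha', hga'⟩ := Finset.mem_image.1 hgB
    have : a' = a := hg (hP.2.1 A' hA' ha') (hP.2.1 A hA haA) hga'
    subst this
    rw [hu A' ⟨hA', ha'⟩]

lemma image_injOn_of_subsets {g : γ → δ} {t : Finset γ} (hg : Set.InjOn g ↑t)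
    {A1 A2 : Finset γ} (h1 : A1 ⊆ t) (h2 : A2 ⊆ t) (h : A1.image g = A2.image g) :
    A1 = A2 := by
  ext a
  constructor
  · intro ha
    have : g a ∈ A2.image g := h ▸ Finset.mem_image_of_mem _ ha
    obtain ⟨a', ha', hga⟩ := Finset.mem_image.1 this
    exact hg (h2 ha') (h1 ha) hga ▸ ha'
  · intro ha
    have : g a ∈ A1.image g := h.symm ▸ Finset.mem_image_of_mem _ ha
    obtain ⟨a', ha', hga⟩ := Finset.mem_image.1 this
    exact hg (h1 ha') (h2 ha) hga ▸ ha'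

lemma image_comp_cancel {f : γ → δ} {f' : δ → γ} {A : Finset γ}
    (hf : ∀ a ∈ A, f' (f a) = a) : (A.image f).image f' = A := by
  rw [Finset.image_image]
  rw [show (f' ∘ f) = fun a => f' (f a) from rfl]
  rw [Finset.image_congr (g := id) (fun a ha => hf a ha)]
  exact Finset.image_id

lemma partitionsOf_empty : partitionsOf (∅ : Finset γ) = {∅} := by
  ext P
  rw [mem_partitionsOf, Finset.mem_singleton]
  constructor
  · intro hP
    ext B
    simp only [Finset.notMem_empty, iff_false]
    intro hB
    have hne := hP.nonempty_of_mem hB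
    have hsub := hP.2.1 B hB
    obtain ⟨a, ha⟩ := hne
    exact absurd (hsub ha) (Finset.notMem_empty a)
  · rintro rfl
    exact ⟨Finset.notMem_empty _, fun B hB => absurd hB (Finset.notMem_empty _),
      fun a ha => absurd ha (Finset.notMem_empty _)⟩

/-- The `χ`-sum over partitions of any finite set only depends on its cardinality. -/
lemma chiSum_eq_chi (s : ℕ → ℂ) (t : Finset γ) :
    ∑ P ∈ partitionsOf t,
      (-1 : ℂ) ^ (P.card - 1) * ((P.card - 1).factorial : ℂ) * ∏ A ∈ P, s A.card / s 0
      = chi s t.card := by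
  classical
  rcases t.eq_empty_or_nonempty with rfl | ht
  · rw [partitionsOf_empty, chi, Finset.card_empty, Finset.univ_eq_empty, partitionsOf_empty]
    simp
  · set n := t.card with hn
    have e := t.equivFin
    obtain ⟨a0, ha0⟩ := ht
    set g : γ → Fin n := fun x => if hx : x ∈ t then e ⟨x, hx⟩ else e ⟨a0, ha0⟩ with hg
    set h : Fin n → γ := fun i => (e.symm i : γ) with hh
    have hmem : ∀ i, h i ∈ t := fun i => (e.symm i).2
    have hgh : ∀ i, g (h i) = i := by
      intro i; simp only [hg, hh, dif_pos (hmem i)]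
      simp
    have hhg : ∀ x ∈ t, h (g x) = x := by
      intro x hx; simp only [hg, hh, dif_pos hx]
      simp
    have hginj : Set.InjOn g ↑t := by
      intro x hx y hy hxy
      have := congrArg h hxy
      rwa [hhg x hx, hhg y hy] at this
    have hhinj : Set.InjOn h (↑(Finset.univ : Finset (Fin n))) := by
      intro x _ y _ hxy
      have := congrArg g hxy
      rwa [hgh, hgh] at this
    have himg : t.image g = (Finset.univ : Finset (Fin n)) := by
      apply Finset.eq_univ_of_forall
      intro i
      exact Finset.mem_image.2 ⟨h i, hmem i, hgh i⟩
    have himg' : (Finset.univ : Finset (Fin n)).image h = t := by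
      ext x
      simp only [Finset.mem_image, Finset.mem_univ, true_and]
      constructor
      · rintro ⟨i, rfl⟩; exact hmem i
      · intro hx; exact ⟨g x, hhg x hx⟩
    rw [chi]
    refine Finset.sum_nbij' (fun P => P.image fun A => A.image g)
      (fun Q => Q.image fun A => A.image h) ?_ ?_ ?_ ?_ ?_
    · intro P hP
      rw [mem_partitionsOf] at hP ⊢
      have := hP.image_finset hginj
      rwa [himg] at this
    · intro Q hQ
      rw [mem_partitionsOf] at hQ ⊢
      have := hQ.image_finset hhinj
      rwa [himg'] at this
    · intro P hP
      rw [mem_partitionsOf] at hP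
      apply image_comp_cancel
      intro A hA
      exact image_comp_cancel (fun a ha => hhg a (hP.2.1 A hA ha))
    · intro Q hQ
      rw [mem_partitionsOf] at hQ
      apply image_comp_cancel
      intro A _
      exact image_comp_cancel (fun i _ => hgh i)
    · intro P hP
      rw [mem_partitionsOf] at hP
      have hcard : (P.image fun A => A.image g).card = P.card := by
        apply Finset.card_image_of_injOn
        intro A1 h1 A2 h2 hA
        exact image_injOn_of_subsets hginj (hP.2.1 A1 h1) (hP.2.1 A2 h2) hA
      rw [hcard]
      congr 1
      rw [Finset.prod_image]
      · apply Finset.prod_congr rfl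
        intro A hA
        congr 2
        exact (Finset.card_image_of_injOn (hginj.mono (by exact_mod_cast hP.2.1 A hA))).symm
      · intro A1 h1 A2 h2 hA
        exact image_injOn_of_subsets hginj (hP.2.1 A1 h1) (hP.2.1 A2 h2) hA

/-- The restriction of a refining partition to a block is a partition of the block. -/
lemma IsPartitionOf.filter_block {t : Finset γ} {σ ρ : Finset (Finset γ)}
    (hσ : IsPartitionOf t σ) (hρ : IsPartitionOf t ρ)
    (href : ∀ A ∈ σ, ∃ B ∈ ρ, A ⊆ B) {B : Finset γ} (hB : B ∈ ρ) :
    IsPartitionOf B (σ.filter fun A => A ⊆ B) := by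
  classical
  refine ⟨fun h => hσ.1 (Finset.mem_filter.1 h).1, fun A hA => (Finset.mem_filter.1 hA).2, ?_⟩
  intro a ha
  have hat : a ∈ t := hρ.2.1 B hB ha
  obtain ⟨A, ⟨hA, haA⟩, hu⟩ := hσ.2.2 a hat
  obtain ⟨B', hB', hAB'⟩ := href A hA
  have hBB : B' = B := hρ.block_eq hB' hB (hAB' haA) ha
  refine ⟨A, ⟨Finset.mem_filter.2 ⟨hA, hBB ▸ hAB'⟩, haA⟩, ?_⟩
  rintro A' ⟨hA', haA'⟩
  exact hu A' ⟨(Finset.mem_filter.1 hA').1, haA'⟩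

lemma biUnion_filter_blocks {t : Finset γ} {σ ρ : Finset (Finset γ)}
    (hσ : IsPartitionOf t σ) (hρ : IsPartitionOf t ρ)
    (href : ∀ A ∈ σ, ∃ B ∈ ρ, A ⊆ B) :
    ρ.biUnion (fun B => σ.filter fun A => A ⊆ B) = σ := by
  classical
  ext A
  simp only [Finset.mem_biUnion, Finset.mem_filter]
  constructor
  · rintro ⟨B, _, hA, _⟩; exact hA
  · intro hA; obtain ⟨B, hB, hAB⟩ := href A hA; exact ⟨B, hB, hA, hAB⟩

lemma pairwiseDisjoint_filter_blocks {t : Finset γ} {σ ρ : Finset (Finset γ)}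
    (hσ : IsPartitionOf t σ) (hρ : IsPartitionOf t ρ) :
    Set.PairwiseDisjoint (↑ρ) (fun B => σ.filter fun A => A ⊆ B) := by
  classical
  intro B1 h1 B2 h2 hne
  simp only [Function.onFun]
  rw [Finset.disjoint_left]
  intro A hA1 hA2
  rw [Finset.mem_coe] at h1 h2
  obtain ⟨hAσ, hAB1⟩ := Finset.mem_filter.1 hA1
  obtain ⟨_, hAB2⟩ := Finset.mem_filter.1 hA2
  obtain ⟨a, ha⟩ := hσ.nonempty_of_mem hAσ
  exact hne (hρ.block_eq h1 h2 (hAB1 ha) (hAB2 ha))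

/-- Per-vertex factorization. -/
lemma vertex_sum (s : ℕ → ℂ) {t : Finset γ} {ρ : Finset (Finset γ)}
    (hρ : IsPartitionOf t ρ)
    [inst : DecidablePred fun σ : Finset (Finset γ) => ∀ A ∈ σ, ∃ B ∈ ρ, A ⊆ B] :
    ∑ σ ∈ (partitionsOf t).filter (fun σ => ∀ A ∈ σ, ∃ B ∈ ρ, A ⊆ B),
      (∏ B ∈ ρ, (-1 : ℂ) ^ ((σ.filter fun A => A ⊆ B).card - 1) *
          (((σ.filter fun A => A ⊆ B).card - 1).factorial : ℂ)) *
        ∏ A ∈ σ, s A.card / s 0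
      = ∏ B ∈ ρ, chi s B.card := by
  classical
  set g : Finset γ → Finset (Finset γ) → ℂ := fun B P =>
    (-1 : ℂ) ^ (P.card - 1) * ((P.card - 1).factorial : ℂ) * ∏ A ∈ P, s A.card / s 0
    with hgdef
  have step1 : ∀ σ ∈ (partitionsOf t).filter (fun σ => ∀ A ∈ σ, ∃ B ∈ ρ, A ⊆ B),
      (∏ B ∈ ρ, (-1 : ℂ) ^ ((σ.filter fun A => A ⊆ B).card - 1) *
          (((σ.filter fun A => A ⊆ B).card - 1).factorial : ℂ)) *
        ∏ A ∈ σ, s A.card / s 0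
      = ∏ B ∈ ρ, g B (σ.filter fun A => A ⊆ B) := by
    intro σ hσ'
    obtain ⟨hσm, href⟩ := Finset.mem_filter.1 hσ'
    have hσ := mem_partitionsOf.1 hσm
    have hw : ∏ A ∈ σ, s A.card / s 0
        = ∏ B ∈ ρ, ∏ A ∈ σ.filter (fun A => A ⊆ B), s A.card / s 0 := by
      conv_lhs => rw [← biUnion_filter_blocks hσ hρ href]
      exact Finset.prod_biUnion (pairwiseDisjoint_filter_blocks hσ hρ)
    rw [hw, ← Finset.prod_mul_distrib]
  rw [Finset.sum_congr rfl step1]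
  have step2 : ∀ B ∈ ρ, chi s B.card = ∑ P ∈ partitionsOf B, g B P := by
    intro B _
    exact (chiSum_eq_chi s B).symm
  rw [Finset.prod_congr rfl step2, Finset.prod_sum]
  refine Finset.sum_nbij' (fun σ => fun B _ => σ.filter fun A => A ⊆ B)
    (fun p => ρ.attach.biUnion fun B => p B.1 B.2) ?_ ?_ ?_ ?_ ?_
  · intro σ hσ'
    obtain ⟨hσm, href⟩ := Finset.mem_filter.1 hσ'
    have hσ := mem_partitionsOf.1 hσm
    rw [Finset.mem_pi]
    intro B hB
    exact mem_partitionsOf.2 (hσ.filter_block hρ href hB)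
  · intro p hp
    rw [Finset.mem_pi] at hp
    have hpart : ∀ B (hB : B ∈ ρ), IsPartitionOf B (p B hB) :=
      fun B hB => mem_partitionsOf.1 (hp B hB)
    rw [Finset.mem_filter]
    constructor
    · rw [mem_partitionsOf]
      refine ⟨?_, ?_, ?_⟩
      · intro h
        obtain ⟨B, _, hmem⟩ := Finset.mem_biUnion.1 h
        exact (hpart B.1 B.2).1 hmem
      · intro A hA
        obtain ⟨B, _, hmem⟩ := Finset.mem_biUnion.1 hA
        exact ((hpart B.1 B.2).2.1 A hmem).trans (hρ.2.1 B.1 B.2)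
      · intro a ha
        obtain ⟨B0, ⟨hB0, haB0⟩, hu0⟩ := hρ.2.2 a ha
        obtain ⟨A, ⟨hA, haA⟩, hu⟩ := (hpart B0 hB0).2.2 a haB0
        refine ⟨A, ⟨Finset.mem_biUnion.2 ⟨⟨B0, hB0⟩, Finset.mem_attach _ _, hA⟩, haA⟩, ?_⟩
        rintro A' ⟨hA', haA'⟩
        obtain ⟨B', _, hmem'⟩ := Finset.mem_biUnion.1 hA'
        have hB'eq : B'.1 = B0 := by
          apply hu0
          exact ⟨B'.2, (hpart B'.1 B'.2).2.1 A' hmem' haA'⟩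
        subst hB'eq
        exact hu A' ⟨hmem', haA'⟩
    · intro A hA
      obtain ⟨B, _, hmem⟩ := Finset.mem_biUnion.1 hA
      exact ⟨B.1, B.2, (hpart B.1 B.2).2.1 A hmem⟩
  · intro σ hσ'
    obtain ⟨hσm, href⟩ := Finset.mem_filter.1 hσ'
    have hσ := mem_partitionsOf.1 hσm
    ext A
    simp only [Finset.mem_biUnion, Finset.mem_attach, true_and, Subtype.exists,
      Finset.mem_filter]
    constructor
    · rintro ⟨B, hB, hA, _⟩; exact hA
    · intro hA; obtain ⟨B, hB, hAB⟩ := href A hA; exact ⟨B, hB, hA, hAB⟩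
  · intro p hp
    rw [Finset.mem_pi] at hp
    have hpart : ∀ B (hB : B ∈ ρ), IsPartitionOf B (p B hB) :=
      fun B hB => mem_partitionsOf.1 (hp B hB)
    funext B hB
    ext A
    simp only [Finset.mem_filter, Finset.mem_biUnion]
    constructor
    · rintro ⟨⟨B', _, hmem'⟩, hAB⟩
      obtain ⟨a, ha⟩ := (hpart B'.1 B'.2).nonempty_of_mem hmem'
      have : B'.1 = B := hρ.block_eq B'.2 hB ((hpart B'.1 B'.2).2.1 A hmem' ha) (hAB ha)
      subst this
      exact hmem'
    · intro hA
      exact ⟨⟨⟨B, hB⟩, Finset.mem_attach _ _, hA⟩, (hpart B hB).2.1 A hA⟩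
  · intro σ _
    rw [← Finset.prod_attach ρ (fun B => g B (σ.filter fun A => A ⊆ B))]

end Helpers

variable {V : Type*} [Fintype V] [DecidableEq V]

/-- The set `E(v)` of edges of `H` incident to the vertex `v`. -/
def incEdges (H : SimpleGraph V) [DecidableRel H.Adj] (v : V) : Finset (Sym2 V) :=
  H.edgeFinset.filter fun e => v ∈ e

open Classical in
/-- The finset of all fractures of `H`: tuples assigning to each vertex `v` a set partition of
the edges incident to `v`. -/
noncomputable def fracturesFinset (H : SimpleGraph V) [DecidableRel H.Adj] :
    Finset (V → Finset (Finset (Sym2 V))) :=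
  (Fintype.piFinset fun v => (incEdges H v).powerset.powerset).filter fun σ =>
    ∀ v, IsPartitionOf (incEdges H v) (σ v)

open Classical in
/-- for a graph `H` (without isolated vertices), a fracture `ρ⃗` of `H` and
signatures `s_v` for the vertices,
`coeff_{H,s⃗}(ρ⃗) = ∑_{σ⃗ ≤ ρ⃗} μ⃗(σ⃗,ρ⃗)·∏_v ∏_{B∈σ⃗(v)} s_v(|B|)/s_v(0)`
equals `∏_v ∏_{B∈ρ⃗(v)} χ(|B|, s_v)`, where
`μ⃗(σ⃗,ρ⃗) = ∏_v μ(σ⃗(v),ρ⃗(v))` and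
`μ(σ,ρ) = ∏_{B∈ρ} (−1)^{|σ_B|−1}(|σ_B|−1)!` with `σ_B` the blocks of `σ` contained in `B`. -/
theorem stmt4 (H : SimpleGraph V) [DecidableRel H.Adj]
    (hnoiso : ∀ v : V, ∃ u, H.Adj v u)
    (ρ : V → Finset (Finset (Sym2 V)))
    (hρ : ∀ v, IsPartitionOf (incEdges H v) (ρ v))
    (s : V → ℕ → ℂ) (hs : ∀ v, s v 0 ≠ 0) :
    (∑ σ ∈ (fracturesFinset H).filter (fun σ => ∀ v, ∀ A ∈ σ v, ∃ B ∈ ρ v, A ⊆ B),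
        (∏ v : V, ∏ B ∈ ρ v,
            (-1 : ℂ) ^ (((σ v).filter fun A => A ⊆ B).card - 1) *
              ((((σ v).filter fun A => A ⊆ B).card - 1).factorial : ℂ)) *
          ∏ v : V, ∏ A ∈ σ v, s v A.card / s v 0)
      = ∏ v : V, ∏ B ∈ ρ v, chi (s v) B.card := by
  have hfr : (fracturesFinset H).filter (fun σ => ∀ v, ∀ A ∈ σ v, ∃ B ∈ ρ v, A ⊆ B)
      = Fintype.piFinset (fun v => (partitionsOf (incEdges H v)).filter
          (fun P => ∀ A ∈ P, ∃ B ∈ ρ v, A ⊆ B)) := by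
    ext σ
    simp only [fracturesFinset, Finset.mem_filter, Fintype.mem_piFinset, Finset.mem_powerset]
    constructor
    · rintro ⟨⟨hpow, hpart⟩, href⟩ v
      exact ⟨mem_partitionsOf.2 (hpart v), href v⟩
    · intro h
      refine ⟨⟨fun v => ?_, fun v => mem_partitionsOf.1 (h v).1⟩, fun v => (h v).2⟩
      intro B hB
      exact Finset.mem_powerset.2 ((mem_partitionsOf.1 (h v).1).2.1 B hB)
  rw [hfr]
  have step : ∀ σ ∈ Fintype.piFinset (fun v => (partitionsOf (incEdges H v)).filter
          (fun P => ∀ A ∈ P, ∃ B ∈ ρ v, A ⊆ B)),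
      (∏ v : V, ∏ B ∈ ρ v,
            (-1 : ℂ) ^ (((σ v).filter fun A => A ⊆ B).card - 1) *
              ((((σ v).filter fun A => A ⊆ B).card - 1).factorial : ℂ)) *
          ∏ v : V, ∏ A ∈ σ v, s v A.card / s v 0
      = ∏ v : V, ((∏ B ∈ ρ v,
            (-1 : ℂ) ^ (((σ v).filter fun A => A ⊆ B).card - 1) *
              ((((σ v).filter fun A => A ⊆ B).card - 1).factorial : ℂ)) *
          ∏ A ∈ σ v, s v A.card / s v 0) := by
    intro σ _
    rw [Finset.prod_mul_distrib]
  rw [Finset.sum_congr rfl step,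
    ← Finset.prod_univ_sum
      (fun v => (partitionsOf (incEdges H v)).filter (fun P => ∀ A ∈ P, ∃ B ∈ ρ v, A ⊆ B))
      (fun v P => (∏ B ∈ ρ v,
            (-1 : ℂ) ^ ((P.filter fun A => A ⊆ B).card - 1) *
              (((P.filter fun A => A ⊆ B).card - 1).factorial : ℂ)) *
          ∏ A ∈ P, s v A.card / s v 0)]
  exact Finset.prod_congr rfl fun v _ => vertex_sum (s v) (hρ v)
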